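/- Let G be a finite connected simple graph with n := n_G ≥ 1, fix a vertex v₀ and let P_G(x) be the reduced weighted Laplacian, and let T be a spanning tree of G. Then there exist a matrix U ∈ GL_n(ℤ) (an integer matrix with determinant ±1) and a bijection σ from the edge set of T to the index set V∖{v₀} such that for every edge e of T, the matrix ∂/∂x_e (Uᵀ·P_G(x)·U) has exactly one nonzero entry, namely the entry 1 in position (σ(e), σ(e)); in particular the variable x_e appears in Uᵀ·P_G(x)·U only in the diagonal entry (σ(e), σ(e)). -/

import Mathlib

open MvPolynomial Matrix

variable {V : Type}

/-- `T ⊆ E(G)` is a spanning tree of `G`: a set of `n_G = |V| - 1` edges such that the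
subgraph `(V, T)` is connected. -/
def SimpleGraph.IsSpanningTree [Fintype V] (G : SimpleGraph V) (T : Finset G.edgeSet) : Prop :=
  T.card = Fintype.card V - 1 ∧
    (SimpleGraph.fromEdgeSet (Subtype.val '' (T : Set G.edgeSet))).Connected

-- The dual graph polynomial `φ_G = Σ_T Π_{e ∈ T} x_e`, summed over all spanning trees.
open scoped Classical in
noncomputable def dualPoly [Fintype V] (R : Type) [CommRing R] (G : SimpleGraph V)
    [Fintype G.edgeSet] : MvPolynomial G.edgeSet R :=
  ∑ T ∈ Finset.univ.filter (fun T : Finset G.edgeSet => G.IsSpanningTree T), ∏ e ∈ T, X e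

-- The reduced weighted Laplacian `P_G(x)` with respect to the removed vertex `v₀`.
open scoped Classical in
noncomputable def redLaplacian [Fintype V] (R : Type) [CommRing R] (G : SimpleGraph V)
    [Fintype G.edgeSet] (v₀ : V) :
    Matrix {u : V // u ≠ v₀} {u : V // u ≠ v₀} (MvPolynomial G.edgeSet R) :=
  fun u w =>
    if u = w then ∑ e : G.edgeSet, if (u : V) ∈ (e : Sym2 V) then X e else 0
    else if h : G.Adj u.1 w.1 then - X ⟨s(u.1, w.1), (G.mem_edgeSet).mpr h⟩ else 0

section Aux
variable [Fintype V] [DecidableEq V] (v₀ : V)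

/-- Indicator vector of a vertex, restricted to `V \ {v₀}`. -/
def RLchi (x : V) : {u : V // u ≠ v₀} → ℤ := fun u => if (u : V) = x then 1 else 0

variable (G : SimpleGraph V) [Fintype G.edgeSet]

/-- Signed incidence vector of an edge. -/
noncomputable def RLd (e : G.edgeSet) : {u : V // u ≠ v₀} → ℤ :=
  RLchi v₀ (Quot.out (e : Sym2 V)).1 - RLchi v₀ (Quot.out (e : Sym2 V)).2

omit [Fintype V] [DecidableEq V] [Fintype G.edgeSet] in
lemma RL_out_mk (e : G.edgeSet) :
    s((Quot.out (e : Sym2 V)).1, (Quot.out (e : Sym2 V)).2) = (e : Sym2 V) := by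
  exact Quot.out_eq _

omit [Fintype V] [DecidableEq V] [Fintype G.edgeSet] in
lemma RL_out_ne (e : G.edgeSet) : (Quot.out (e : Sym2 V)).1 ≠ (Quot.out (e : Sym2 V)).2 := by
  intro h
  have := G.not_isDiag_of_mem_edgeSet e.2
  rw [← RL_out_mk G e, Sym2.mk_isDiag_iff] at this
  exact this h

lemma RLd_sq (f : G.edgeSet) (u : {u : V // u ≠ v₀}) :
    RLd v₀ G f u * RLd v₀ G f u = if (u : V) ∈ (f : Sym2 V) then 1 else 0 := by
  have hmk := RL_out_mk G f
  have hxy := RL_out_ne G f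
  rcases hq : Quot.out (f : Sym2 V) with ⟨x, y⟩
  rw [hq] at hmk hxy
  dsimp only at hmk hxy
  have hmem : ((u : V) ∈ (f : Sym2 V)) ↔ (u : V) = x ∨ (u : V) = y := by
    rw [← hmk]; exact Sym2.mem_iff
  simp only [hmem]
  rcases eq_or_ne (u : V) x with h1 | h1 <;> rcases eq_or_ne (u : V) y with h2 | h2
  · exact absurd (h1.symm.trans h2) hxy
  · simp [RLd, hq, RLchi, h1, h2, hxy]
  · simp [RLd, hq, RLchi, h1, h2, hxy, hxy.symm]
  · simp [RLd, hq, RLchi, h1, h2]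

lemma RLd_mul (f : G.edgeSet) (u w : {u : V // u ≠ v₀}) (huw : u ≠ w) :
    RLd v₀ G f u * RLd v₀ G f w = if (f : Sym2 V) = s((u : V), (w : V)) then -1 else 0 := by
  have huw' : (u : V) ≠ (w : V) := fun h => huw (Subtype.ext h)
  have hmk := RL_out_mk G f
  have hxy := RL_out_ne G f
  rcases hq : Quot.out (f : Sym2 V) with ⟨x, y⟩
  rw [hq] at hmk hxy
  dsimp only at hmk hxy
  by_cases h : (f : Sym2 V) = s((u : V), (w : V))
  · rw [if_pos h]
    rw [← hmk, Sym2.eq_iff] at h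
    rcases h with ⟨h1, h2⟩ | ⟨h1, h2⟩ <;> subst h1 <;> subst h2 <;>
      simp [RLd, hq, RLchi, huw', huw'.symm, hxy, hxy.symm]
  · rw [if_neg h]
    have hu : RLd v₀ G f u = 0 ∨ RLd v₀ G f w = 0 := by
      by_contra hc
      push_neg at hc
      have hu' : (u : V) = x ∨ (u : V) = y := by
        by_contra hcu; push_neg at hcu
        exact hc.1 (by simp [RLd, hq, RLchi, hcu.1, hcu.2])
      have hw' : (w : V) = x ∨ (w : V) = y := by
        by_contra hcw; push_neg at hcw
        exact hc.2 (by simp [RLd, hq, RLchi, hcw.1, hcw.2])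
      rcases hu' with h1 | h1 <;> rcases hw' with h2 | h2
      · exact huw' (h1.trans h2.symm)
      · exact h (by rw [← hmk, h1, h2])
      · exact h (by rw [← hmk, h1, h2]; exact Sym2.eq_swap)
      · exact huw' (h1.trans h2.symm)
    rcases hu with h0 | h0 <;> rw [h0] <;> ring


lemma redLaplacian_eq (u w : {u : V // u ≠ v₀}) :
    redLaplacian ℤ G v₀ u w
      = ∑ f : G.edgeSet, C (RLd v₀ G f u * RLd v₀ G f w) * X f := by
  rcases eq_or_ne u w with h | h
  · subst h
    simp only [redLaplacian]
    rw [if_true]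
    refine Finset.sum_congr rfl fun f _ => ?_
    rw [RLd_sq]
    split_ifs with hf <;> simp
  · simp only [redLaplacian]
    rw [if_neg h]
    by_cases hadj : G.Adj u.1 w.1
    · rw [dif_pos hadj]
      rw [Finset.sum_eq_single (⟨s(u.1, w.1), (G.mem_edgeSet).mpr hadj⟩ : G.edgeSet)]
      · rw [RLd_mul v₀ G _ u w h]
        simp
      · intro f _ hf
        rw [RLd_mul v₀ G f u w h, if_neg, map_zero, zero_mul]
        exact fun hc => hf (Subtype.ext hc)
      · simp
    · rw [dif_neg hadj]
      refine (Finset.sum_eq_zero fun f _ => ?_).symm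
      rw [RLd_mul v₀ G f u w h, if_neg, map_zero, zero_mul]
      intro hc
      exact hadj ((G.mem_edgeSet).mp (hc ▸ f.2))

lemma pderiv_redLaplacian (e : G.edgeSet) (a b : {u : V // u ≠ v₀}) :
    pderiv e (redLaplacian ℤ G v₀ a b) = C (RLd v₀ G e a * RLd v₀ G e b) := by
  classical
  rw [redLaplacian_eq, map_sum, Finset.sum_eq_single e]
  · rw [pderiv_C_mul, pderiv_X_self, mul_one]
  · intro f _ hf
    rw [pderiv_C_mul, pderiv_X_of_ne hf, mul_zero]
  · simp

end Aux


/-- For a finite connected simple graph `G` with `n_G ≥ 1`, a vertex `v₀` and a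
spanning tree `T`, there is an integer matrix `U` with determinant `±1` and a bijection `σ` from
the edges of `T` to the index set `V ∖ {v₀}`, such that for each edge `e` of `T` the derivative
`∂/∂x_e (Uᵀ · P_G(x) · U)` has exactly one nonzero entry, namely `1` at position `(σ e, σ e)`. -/
theorem redLaplacian_diagonalization [Fintype V] [DecidableEq V] (G : SimpleGraph V)
    [Fintype G.edgeSet] (hG : G.Connected) (hn : 1 ≤ Fintype.card V - 1) (v₀ : V)
    (T : Finset G.edgeSet) (hT : G.IsSpanningTree T) :
    ∃ (U : Matrix {u : V // u ≠ v₀} {u : V // u ≠ v₀} ℤ)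
      (σ : {e : G.edgeSet // e ∈ T} ≃ {u : V // u ≠ v₀}),
      (U.det = 1 ∨ U.det = -1) ∧
      ∀ (e : G.edgeSet) (he : e ∈ T) (u w : {u : V // u ≠ v₀}),
        pderiv e
            (((U.map fun a : ℤ => (C a : MvPolynomial G.edgeSet ℤ))ᵀ * redLaplacian ℤ G v₀ *
                (U.map fun a : ℤ => (C a : MvPolynomial G.edgeSet ℤ))) u w)
          = if u = σ ⟨e, he⟩ ∧ w = σ ⟨e, he⟩ then 1 else 0 := by
  classical
  obtain ⟨hTcard, hTconn⟩ := hT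
  set S : Submodule ℤ ({u : V // u ≠ v₀} → ℤ) :=
    Submodule.span ℤ (Set.range fun f : {e : G.edgeSet // e ∈ T} => RLd v₀ G f.1) with hS
  -- telescoping along walks in the spanning subgraph
  have hwalk : ∀ (a b : V),
      (SimpleGraph.fromEdgeSet (Subtype.val '' (T : Set G.edgeSet))).Walk a b →
      RLchi v₀ a - RLchi v₀ b ∈ S := by
    intro a b p
    induction p with
    | nil => simp
    | @cons x y z h p ih =>
      rw [SimpleGraph.fromEdgeSet_adj] at h
      obtain ⟨⟨e, heT, hev⟩, -⟩ := h
      have hdS : RLd v₀ G e ∈ S := Submodule.subset_span ⟨⟨e, heT⟩, rfl⟩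
      have h2 : s((Quot.out (e : Sym2 V)).1, (Quot.out (e : Sym2 V)).2) = s(x, y) := by
        rw [RL_out_mk G e, hev]
      rw [Sym2.eq_iff] at h2
      have key : RLchi v₀ x - RLchi v₀ y ∈ S := by
        rcases h2 with ⟨h1, h2⟩ | ⟨h1, h2⟩
        · have hh : RLd v₀ G e = RLchi v₀ x - RLchi v₀ y := by rw [RLd, h1, h2]
          rwa [← hh]
        · have hh : RLd v₀ G e = RLchi v₀ y - RLchi v₀ x := by rw [RLd, h1, h2]
          have := S.neg_mem hdS
          rwa [hh, neg_sub] at this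
      have := S.add_mem key ih
      rwa [sub_add_sub_cancel] at this
  have hchi0 : RLchi v₀ v₀ = 0 := funext fun u => if_neg u.2
  have hStop : S = ⊤ := by
    rw [eq_top_iff]
    intro y _
    have hy : y = ∑ u : {u : V // u ≠ v₀}, y u • RLchi v₀ (u : V) := by
      funext w
      rw [Finset.sum_apply, Finset.sum_eq_single w]
      · simp [RLchi]
      · intro u _ hu
        have : (w : V) ≠ (u : V) := fun hh => hu (Subtype.ext hh.symm)
        simp [RLchi, this]
      · simp
    rw [hy]
    refine Submodule.sum_mem _ fun u _ => Submodule.smul_mem _ _ ?_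
    have := hwalk u.1 v₀ (hTconn.preconnected u.1 v₀).some
    rwa [hchi0, sub_zero] at this
  -- the bijection between tree edges and non-root vertices
  have hcard : Fintype.card {e : G.edgeSet // e ∈ T} = Fintype.card {u : V // u ≠ v₀} := by
    rw [Fintype.card_coe, hTcard, Fintype.card_subtype_compl, Fintype.card_subtype_eq]
  set ε := Fintype.equivOfCardEq hcard with hε
  -- the (square) incidence matrix of the tree
  set N : Matrix {u : V // u ≠ v₀} {u : V // u ≠ v₀} ℤ :=
    fun u v => RLd v₀ G (ε.symm v).1 u with hNdef
  have hNrange : LinearMap.range N.mulVecLin = ⊤ := by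
    rw [Matrix.range_mulVecLin]
    have hcol : N.col = (fun f : {e : G.edgeSet // e ∈ T} => RLd v₀ G f.1) ∘ ε.symm := by
      ext v u; rfl
    rw [hcol, ε.symm.surjective.range_comp, ← hS, hStop]
  have hNunit : IsUnit N := by
    rw [← Matrix.mulVec_surjective_iff_isUnit]
    intro y
    obtain ⟨x, hx⟩ := LinearMap.range_eq_top.mp hNrange y
    exact ⟨x, hx⟩
  have hNdet : IsUnit N.det := (Matrix.isUnit_iff_isUnit_det N).mp hNunit
  set U : Matrix {u : V // u ≠ v₀} {u : V // u ≠ v₀} ℤ := (Nᵀ)⁻¹ with hUdef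
  have hNtdet : IsUnit Nᵀ.det := by rwa [Matrix.det_transpose]
  have hUdet : U.det = 1 ∨ U.det = -1 := by
    rw [← Int.isUnit_iff]
    exact Nᵀ.isUnit_nonsing_inv_det hNtdet
  have hUt : Uᵀ = N⁻¹ := by
    rw [hUdef, Matrix.transpose_nonsing_inv, Matrix.transpose_transpose]
  have hinv : Uᵀ * N = 1 := by rw [hUt]; exact Matrix.nonsing_inv_mul N hNdet
  have key : ∀ (u : {u : V // u ≠ v₀}) (f : {e : G.edgeSet // e ∈ T}),
      (∑ a : {u : V // u ≠ v₀}, U a u * RLd v₀ G f.1 a) = if u = ε f then 1 else 0 := by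
    intro u f
    have h1 := congrFun (congrFun hinv u) (ε f)
    rw [Matrix.mul_apply] at h1
    simp only [Matrix.transpose_apply, Matrix.one_apply, hNdef, Equiv.symm_apply_apply] at h1
    exact h1
  have hentry : ∀ u w : {u : V // u ≠ v₀},
      (((U.map fun a : ℤ => (C a : MvPolynomial G.edgeSet ℤ))ᵀ * redLaplacian ℤ G v₀ *
          (U.map fun a : ℤ => (C a : MvPolynomial G.edgeSet ℤ))) u w)
        = ∑ b : {u : V // u ≠ v₀}, ∑ a : {u : V // u ≠ v₀},
            C (U a u) * redLaplacian ℤ G v₀ a b * C (U b w) := by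
    intro u w
    rw [Matrix.mul_apply]
    refine Finset.sum_congr rfl fun b _ => ?_
    rw [Matrix.mul_apply, Finset.sum_mul]
    refine Finset.sum_congr rfl fun a _ => ?_
    simp [Matrix.transpose_apply, Matrix.map_apply]
  refine ⟨U, ε, hUdet, ?_⟩
  intro e he u w
  have hterm : ∀ a b : {u : V // u ≠ v₀},
      pderiv e (C (U a u) * redLaplacian ℤ G v₀ a b * C (U b w))
        = C (U a u * RLd v₀ G e a) * C (RLd v₀ G e b * U b w) := by
    intro a b
    rw [mul_assoc, pderiv_C_mul, pderiv_mul, pderiv_C, mul_zero, add_zero,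
      pderiv_redLaplacian]
    simp only [← C_mul]
    exact congrArg C (by ring)
  calc pderiv e (((U.map fun a : ℤ => (C a : MvPolynomial G.edgeSet ℤ))ᵀ *
          redLaplacian ℤ G v₀ * (U.map fun a : ℤ => (C a : MvPolynomial G.edgeSet ℤ))) u w)
      = ∑ b : {u : V // u ≠ v₀}, ∑ a : {u : V // u ≠ v₀},
          C (U a u * RLd v₀ G e a) * C (RLd v₀ G e b * U b w) := by
        rw [hentry u w, map_sum]
        refine Finset.sum_congr rfl fun b _ => ?_
        rw [map_sum]
        exact Finset.sum_congr rfl fun a _ => hterm a b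
    _ = (∑ a : {u : V // u ≠ v₀}, C (U a u * RLd v₀ G e a)) *
          ∑ b : {u : V // u ≠ v₀}, C (RLd v₀ G e b * U b w) := by
        rw [Finset.sum_comm, Finset.sum_mul_sum]
    _ = C (∑ a : {u : V // u ≠ v₀}, U a u * RLd v₀ G e a) *
          C (∑ b : {u : V // u ≠ v₀}, U b w * RLd v₀ G e b) := by
        rw [map_sum, map_sum]
        congr 1
        exact Finset.sum_congr rfl fun b _ => congrArg C (mul_comm _ _)
    _ = if u = ε ⟨e, he⟩ ∧ w = ε ⟨e, he⟩ then 1 else 0 := by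
        rw [key u ⟨e, he⟩, key w ⟨e, he⟩]
        by_cases h1 : u = ε ⟨e, he⟩ <;> by_cases h2 : w = ε ⟨e, he⟩ <;>
          simp [h1, h2]
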